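/- Let f be an Anosov polynomial of degree 4 (monic, integer coefficients, constant term ±1, no roots of absolute value 1) with roots λ_1, λ_2, λ_3, λ_4, and let e_1, e_2, e_3, e_4 ∈ ℤ be such that μ = λ_1^{e_1}λ_2^{e_2}λ_3^{e_3}λ_4^{e_4} is not rational. Then the minimal polynomial of μ over ℚ has even degree. -/

import Mathlib

open Polynomial

section Aux

variable {L : Type*} [Field L] [Algebra ℚ L] [FiniteDimensional ℚ L] [Normal ℚ L]

lemma stmt13_orbit_eq_rootSet (x : L) :
    MulAction.orbit (L ≃ₐ[ℚ] L) x = (minpoly ℚ x).rootSet L := by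
  ext y
  constructor
  · rintro ⟨σ, rfl⟩
    rw [mem_rootSet]
    refine ⟨minpoly.ne_zero (IsIntegral.of_finite ℚ x), ?_⟩
    show aeval (σ x) (minpoly ℚ x) = 0
    rw [aeval_algHom_apply, minpoly.aeval, map_zero]
  · intro hy
    rw [mem_rootSet] at hy
    obtain ⟨σ, hσ⟩ := minpoly.exists_algEquiv_of_root'
      (Algebra.IsAlgebraic.isAlgebraic (R := ℚ) x) hy.2
    exact ⟨σ, hσ⟩

lemma stmt13_index_stabilizer (x : L) :
    (MulAction.stabilizer (L ≃ₐ[ℚ] L) x).index = (minpoly ℚ x).natDegree := by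
  have hint := IsIntegral.of_finite ℚ x
  rw [MulAction.index_stabilizer, stmt13_orbit_eq_rootSet, Set.ncard_eq_toFinset_card',
    Set.toFinset_card, card_rootSet_eq_natDegree ((minpoly.irreducible hint).separable)
      (Normal.splits ‹_› x)]

lemma stmt13_prod_subgroup (P : Subgroup (L ≃ₐ[ℚ] L)) [Fintype P] (hP2 : ¬ 2 ∣ P.index)
    (r : L) (hpow : ∃ k : ℕ, (minpoly ℚ r).natDegree = 2 ^ k)
    (hprod : ((minpoly ℚ r).aroots L).prod = 1 ∨ ((minpoly ℚ r).aroots L).prod = -1) :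
    (∏ p : P, (p : L ≃ₐ[ℚ] L) r) = 1 ∨ (∏ p : P, (p : L ≃ₐ[ℚ] L) r) = -1 := by
  classical
  set G := L ≃ₐ[ℚ] L
  have hint := IsIntegral.of_finite ℚ r
  set n := (minpoly ℚ r).natDegree with hn
  obtain ⟨k, hk⟩ := hpow
  set S := MulAction.stabilizer G r with hSdef
  have hS : S.index = n := stmt13_index_stabilizer r
  set T : Finset L := Finset.image (fun p : P => (p : G) r) Finset.univ with hT
  have horb : MulAction.orbit P r = (T : Set L) := by
    ext y
    simp only [MulAction.mem_orbit_iff, hT, Finset.coe_image, Finset.coe_univ, Set.image_univ,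
      Set.mem_range]
    rfl
  have hstab : MulAction.stabilizer P r = S.subgroupOf P := by
    ext p
    simp only [MulAction.mem_stabilizer_iff, Subgroup.mem_subgroupOf, hSdef]
    rfl
  have hTcard : S.relIndex P = T.card := by
    rw [Subgroup.relIndex, ← hstab, MulAction.index_stabilizer, horb, Set.ncard_coe_finset]
  have e1 : (S ⊓ P).relIndex P * P.index = (S ⊓ P).index :=
    Subgroup.relIndex_mul_index inf_le_right
  have e2 : (S ⊓ P).relIndex S * S.index = (S ⊓ P).index :=
    Subgroup.relIndex_mul_index inf_le_left
  have hdvd : n ∣ S.relIndex P * P.index := by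
    rw [← Subgroup.inf_relIndex_right, e1]
    exact hS ▸ Dvd.intro_left _ e2
  have hcop : Nat.Coprime n P.index := by
    rw [hk]
    exact ((Nat.prime_two.coprime_iff_not_dvd).mpr hP2).pow_left k
  have hdvd' : n ∣ T.card := by
    rw [← hTcard]
    exact hcop.dvd_of_dvd_mul_right hdvd
  have hsep : ((minpoly ℚ r).map (algebraMap ℚ L)).Separable :=
    ((minpoly.irreducible hint).separable).map
  have hnodup : ((minpoly ℚ r).aroots L).Nodup := nodup_roots hsep
  have hsplits : ((minpoly ℚ r).map (algebraMap ℚ L)).Splits :=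
    Normal.splits ‹_› r
  have hrcard : ((minpoly ℚ r).aroots L).card = n := by
    rw [splits_iff_card_roots.mp hsplits, natDegree_map]
  have hTsub : T ⊆ ((minpoly ℚ r).aroots L).toFinset := by
    intro t ht
    rw [hT, Finset.mem_image] at ht
    obtain ⟨p, -, rfl⟩ := ht
    rw [Multiset.mem_toFinset, mem_aroots]
    refine ⟨minpoly.ne_zero hint, ?_⟩
    rw [aeval_algHom_apply, minpoly.aeval, map_zero]
  have htfcard : ((minpoly ℚ r).aroots L).toFinset.card = n := by
    rw [Multiset.toFinset_card_of_nodup hnodup, hrcard]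
  have hTne : r ∈ T := by
    rw [hT, Finset.mem_image]
    exact ⟨1, Finset.mem_univ _, rfl⟩
  have hTcard' : T.card = n := by
    refine le_antisymm (htfcard ▸ Finset.card_le_card hTsub) (Nat.le_of_dvd ?_ hdvd')
    exact Finset.card_pos.mpr ⟨r, hTne⟩
  have hTeq : T = ((minpoly ℚ r).aroots L).toFinset :=
    Finset.eq_of_subset_of_card_le hTsub (by rw [htfcard, hTcard'])
  set c := (Finset.univ.filter (fun p : P => (p : G) r = r)).card with hc
  have hfib : ∀ t ∈ T, (Finset.univ.filter (fun p : P => (p : G) r = t)).card = c := by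
    intro t ht
    rw [hT, Finset.mem_image] at ht
    obtain ⟨p₀, -, hp₀⟩ := ht
    rw [hc]
    apply Finset.card_bij' (fun p _ => p₀⁻¹ * p) (fun p _ => p₀ * p)
    · intro p hp
      rw [Finset.mem_filter] at hp ⊢
      refine ⟨Finset.mem_univ _, ?_⟩
      have : ((p₀⁻¹ * p : P) : G) r = (p₀ : G)⁻¹ ((p : G) r) := rfl
      rw [this, hp.2, ← hp₀]
      show ((p₀ : G)⁻¹ * (p₀ : G)) r = r
      rw [inv_mul_cancel]
      rfl
    · intro p hp
      rw [Finset.mem_filter] at hp ⊢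
      refine ⟨Finset.mem_univ _, ?_⟩
      have : ((p₀ * p : P) : G) r = (p₀ : G) ((p : G) r) := rfl
      rw [this, hp.2, hp₀]
    · intro p _; group
    · intro p _; group
  have hprodT : (∏ p : P, (p : G) r) = ∏ t ∈ T, t ^ c := by
    rw [← Finset.prod_fiberwise_of_maps_to (g := fun p : P => (p : G) r)
      (fun p _ => Finset.mem_image_of_mem _ (Finset.mem_univ p))]
    refine Finset.prod_congr rfl fun t ht => ?_
    rw [← hfib t ht]
    rw [Finset.prod_congr rfl (fun p hp => (Finset.mem_filter.mp hp).2), Finset.prod_const]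
  have hprodroots : ∏ t ∈ T, t = ((minpoly ℚ r).aroots L).prod := by
    rw [hTeq, Finset.prod_eq_multiset_prod, Multiset.toFinset_val,
      Multiset.dedup_eq_self.mpr hnodup, Multiset.map_id']
  have hfinal : (∏ p : P, (p : G) r) = (((minpoly ℚ r).aroots L).prod) ^ c := by
    rw [hprodT, Finset.prod_pow, hprodroots]
  rcases hprod with h | h
  · left; rw [hfinal, h, one_pow]
  · rcases Nat.even_or_odd c with hcc | hcc
    · left; rw [hfinal, h, hcc.neg_one_pow]
    · right; rw [hfinal, h, hcc.neg_one_pow]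

lemma stmt13_key_root (f : ℤ[X]) (hf : f.Monic) (hdeg : f.natDegree = 4)
    (hconst : f.coeff 0 = 1 ∨ f.coeff 0 = -1) (r : L) (hr : aeval r f = 0) :
    ((∃ k : ℕ, (minpoly ℚ r).natDegree = 2 ^ k) ∧
      (((minpoly ℚ r).aroots L).prod = 1 ∨ ((minpoly ℚ r).aroots L).prod = -1))
    ∨ (f.eval 1 = 0 ∨ f.eval (-1) = 0) := by
  have hintZ : IsIntegral ℤ r := ⟨f, hf, hr⟩
  set gZ := minpoly ℤ r with hgZ
  have hgm : gZ.Monic := minpoly.monic hintZ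
  haveI : CharZero L := charZero_of_injective_algebraMap (algebraMap ℚ L).injective
  obtain ⟨h, hfh⟩ : gZ ∣ f := minpoly.isIntegrallyClosed_dvd hintZ hr
  have hhm : h.Monic := hgm.of_mul_monic_left (hfh ▸ hf)
  have hc0 : gZ.coeff 0 * h.coeff 0 = f.coeff 0 := by rw [hfh, mul_coeff_zero]
  have hg0 : gZ.coeff 0 = 1 ∨ gZ.coeff 0 = -1 := by
    rw [← Int.isUnit_iff]
    rcases hconst with hc | hc
    · exact IsUnit.of_mul_eq_one _ (by rw [hc0, hc])
    · exact IsUnit.of_mul_eq_one (-h.coeff 0) (by rw [mul_neg, hc0, hc, neg_neg])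
  have hh0 : h.coeff 0 = 1 ∨ h.coeff 0 = -1 := by
    rw [← Int.isUnit_iff]
    rcases hconst with hc | hc
    · exact IsUnit.of_mul_eq_one _ (by rw [mul_comm, hc0, hc])
    · exact IsUnit.of_mul_eq_one (-gZ.coeff 0) (by rw [mul_neg, mul_comm, hc0, hc, neg_neg])
  have hQ : minpoly ℚ r = gZ.map (algebraMap ℤ ℚ) :=
    minpoly.isIntegrallyClosed_eq_field_fractions ℚ L hintZ
  have hndeg : (minpoly ℚ r).natDegree = gZ.natDegree := by
    rw [hQ, hgm.natDegree_map]
  have hsum : gZ.natDegree + h.natDegree = 4 := by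
    rw [← hdeg, hfh, hgm.natDegree_mul hhm]
  have hpos : 0 < gZ.natDegree := minpoly.natDegree_pos hintZ
  have lin : ∀ p q : ℤ[X], f = p * q → q.Monic → q.natDegree = 1 →
      (q.coeff 0 = 1 ∨ q.coeff 0 = -1) → f.eval 1 = 0 ∨ f.eval (-1) = 0 := by
    intro p q hpq hqm hq1 hq0
    have hq : q = X + C (q.coeff 0) := hqm.eq_X_add_C hq1
    have : f.eval (-q.coeff 0) = 0 := by
      rw [hpq, eval_mul, hq]
      simp
    rcases hq0 with h0 | h0
    · right; rw [h0] at this; exact this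
    · left; rw [h0] at this; simpa using this
  have quad : Even (minpoly ℚ r).natDegree →
      ((minpoly ℚ r).aroots L).prod = 1 ∨ ((minpoly ℚ r).aroots L).prod = -1 := by
    intro he
    have hQm : (minpoly ℚ r).Monic := minpoly.monic (IsIntegral.of_finite ℚ r)
    have hsplits : ((minpoly ℚ r).map (algebraMap ℚ L)).Splits :=
      Normal.splits ‹_› r
    have hpr := hsplits.coeff_zero_eq_prod_roots_of_monic (hQm.map (algebraMap ℚ L))
    rw [natDegree_map, he.neg_one_pow, one_mul] at hpr
    have hcc : ((minpoly ℚ r).map (algebraMap ℚ L)).coeff 0 = algebraMap ℤ L (gZ.coeff 0) := by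
      rw [coeff_map, hQ, coeff_map, ← IsScalarTower.algebraMap_apply]
    rw [hcc] at hpr
    rcases hg0 with h0 | h0
    · left; rw [h0, map_one] at hpr; exact hpr.symm
    · right; rw [h0, map_neg, map_one] at hpr; exact hpr.symm
  have hle : gZ.natDegree ≤ 4 := by omega
  interval_cases hd : gZ.natDegree
  · exact Or.inr (lin h gZ (by rw [hfh, mul_comm]) hgm hd hg0)
  · exact Or.inl ⟨⟨1, by rw [hndeg]; norm_num⟩, quad (by rw [hndeg]; decide)⟩
  · have h1 : h.natDegree = 1 := by omega
    exact Or.inr (lin gZ h hfh hhm h1 hh0)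
  · exact Or.inl ⟨⟨2, by rw [hndeg]; norm_num⟩, quad (by rw [hndeg]; decide)⟩


lemma stmt13_main {L : Type*} [Field L] [Algebra ℚ L] [FiniteDimensional ℚ L] [Normal ℚ L]
    (f : ℤ[X]) (hf : f.Monic) (hdeg : f.natDegree = 4)
    (hconst : f.coeff 0 = 1 ∨ f.coeff 0 = -1)
    (hno : ∀ a : ℤ, a = 1 ∨ a = -1 → f.eval a ≠ 0)
    (lam' : Fin 4 → L) (hroot : ∀ i, aeval (lam' i) f = 0)
    (e : Fin 4 → ℤ) (μ' : L) (hμ' : μ' = ∏ i, lam' i ^ e i)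
    (hodd : ¬ Even (minpoly ℚ μ').natDegree) :
    ∃ N : ℕ, 0 < N ∧ (μ' ^ N = 1 ∨ μ' ^ N = -1) := by
  classical
  set G := L ≃ₐ[ℚ] L with hG
  haveI : Fintype G := AlgEquiv.fintype ℚ L
  set H := MulAction.stabilizer G μ' with hH
  have hHindex : H.index = (minpoly ℚ μ').natDegree := stmt13_index_stabilizer μ'
  have hH2 : ¬ 2 ∣ H.index := by
    intro hdvd
    exact hodd (hHindex ▸ (even_iff_two_dvd.mpr hdvd))
  obtain ⟨Q⟩ : Nonempty (Sylow 2 H) := Sylow.nonempty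
  set P : Subgroup G := (Q : Subgroup H).map H.subtype with hP
  haveI : Fintype P := Fintype.ofFinite _
  have hPH : P ≤ H := Subgroup.map_subtype_le _
  have hPindex : P.index = (Q : Subgroup H).index * H.index := by
    have h1 : P.relIndex H * H.index = P.index := Subgroup.relIndex_mul_index hPH
    have h2 : P.relIndex H = (Q : Subgroup H).index := by
      rw [Subgroup.relIndex]
      congr 1
      exact Subgroup.comap_map_eq_self_of_injective (Subgroup.subtype_injective H) _
    rw [← h1, h2]
  have hP2 : ¬ 2 ∣ P.index := by
    rw [hPindex]
    intro hdvd
    rcases (Nat.prime_two.dvd_mul).mp hdvd with h | h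
    · exact Q.not_dvd_index h
    · exact hH2 h
  have hfix : ∀ p : P, (p : G) μ' = μ' := fun p => MulAction.mem_stabilizer_iff.mp (hPH p.2)
  refine ⟨Fintype.card P, Fintype.card_pos, ?_⟩
  have h1 : ∏ p : P, (p : G) μ' = μ' ^ (Fintype.card P) := by
    rw [Finset.prod_congr rfl (fun p _ => hfix p), Finset.prod_const, Finset.card_univ]
  have h2 : ∏ p : P, (p : G) μ' = ∏ i, (∏ p : P, (p : G) (lam' i)) ^ e i := by
    have hstep : ∀ p : P, (p : G) μ' = ∏ i, ((p : G) (lam' i)) ^ e i := by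
      intro p
      rw [hμ', map_prod]
      exact Finset.prod_congr rfl fun i _ => map_zpow₀ (p : G) _ _
    rw [Finset.prod_congr rfl (fun p _ => hstep p), Finset.prod_comm]
    exact Finset.prod_congr rfl fun i _ => Finset.prod_zpow _ _ _
  have hpm : ∀ i : Fin 4, (∏ p : P, (p : G) (lam' i)) ^ e i = 1 ∨
      (∏ p : P, (p : G) (lam' i)) ^ e i = -1 := by
    intro i
    rcases stmt13_key_root f hf hdeg hconst (lam' i) (hroot i) with ⟨hpow, hprodr⟩ | hbad
    · rcases stmt13_prod_subgroup P hP2 (lam' i) hpow hprodr with h | h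
      · left; rw [h, one_zpow]
      · rcases Int.even_or_odd (e i) with he | he
        · left; rw [h, he.neg_one_zpow]
        · right; rw [h, he.neg_one_zpow]
    · rcases hbad with h | h
      · exact absurd h (hno 1 (Or.inl rfl))
      · exact absurd h (hno (-1) (Or.inr rfl))
  have hfin : (∏ i, (∏ p : P, (p : G) (lam' i)) ^ e i) = 1 ∨
      (∏ i, (∏ p : P, (p : G) (lam' i)) ^ e i) = -1 := by
    refine Finset.prod_induction _ (fun z => z = 1 ∨ z = -1) ?_ (Or.inl rfl)
      (fun i _ => hpm i)
    rintro a b (rfl | rfl) (rfl | rfl) <;> norm_num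
  rw [← h1, h2]
  exact hfin

end Aux

/-- Let `f` be an Anosov polynomial of degree 4 (monic integer polynomial
with constant term ±1 and no roots of absolute value 1) with roots `lam 0, …, lam 3`, and
let `e : Fin 4 → ℤ` be such that `μ = ∏ lam i ^ e i` is not rational. Then the minimal
polynomial of `μ` over ℚ has even degree. -/
theorem stmt13 (f : Polynomial ℤ) (hf : f.Monic) (hdeg : f.natDegree = 4)
    (hconst : f.coeff 0 = 1 ∨ f.coeff 0 = -1)
    (lam : Fin 4 → ℂ)
    (hroots : (f.map (Int.castRingHom ℂ)).roots = Multiset.map lam Finset.univ.val)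
    (habs : ∀ i, ‖lam i‖ ≠ 1)
    (e : Fin 4 → ℤ) (μ : ℂ) (hμ : μ = ∏ i, lam i ^ e i)
    (hirrat : ∀ q : ℚ, μ ≠ (q : ℂ)) :
    Even (minpoly ℚ μ).natDegree := by
  classical
  by_contra hodd
  have hno : ∀ a : ℤ, a = 1 ∨ a = -1 → f.eval a ≠ 0 := by
    intro a ha heval
    have hmem : ((a : ℂ)) ∈ (f.map (Int.castRingHom ℂ)).roots := by
      rw [mem_roots ((hf.map (Int.castRingHom ℂ)).ne_zero)]
      show eval ((a : ℂ)) (f.map (Int.castRingHom ℂ)) = 0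
      rw [eval_map, eval₂_at_intCast, Int.cast_id, heval, map_zero]
    rw [hroots] at hmem
    obtain ⟨j, -, hj⟩ := Multiset.mem_map.mp hmem
    apply habs j
    rw [hj]
    rcases ha with rfl | rfl <;> simp
  haveI : IsSplittingField ℚ (f.map (Int.castRingHom ℚ)).SplittingField (f.map (Int.castRingHom ℚ)) :=
    Polynomial.IsSplittingField.splittingField _
  haveI : Normal ℚ (f.map (Int.castRingHom ℚ)).SplittingField :=
    Polynomial.SplittingField.instNormal _
  set ι : (f.map (Int.castRingHom ℚ)).SplittingField →ₐ[ℚ] ℂ :=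
    Polynomial.IsSplittingField.lift _ (f.map (Int.castRingHom ℚ))
      (IsAlgClosed.splits _) with hι0
  have hmap1 : f.map (Int.castRingHom ℂ)
      = (((f.map (Int.castRingHom ℚ)).map
          (algebraMap ℚ (f.map (Int.castRingHom ℚ)).SplittingField)).map ι.toRingHom) := by
    rw [Polynomial.map_map, Polynomial.map_map]
    congr 1
    exact (RingHom.eq_intCast' _).trans (RingHom.eq_intCast' _).symm
  have hsplitsL := Polynomial.IsSplittingField.splits
    (f.map (Int.castRingHom ℚ)).SplittingField (f.map (Int.castRingHom ℚ))
  have hroots2 : Multiset.map (⇑ι)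
      (((f.map (Int.castRingHom ℚ)).map
        (algebraMap ℚ (f.map (Int.castRingHom ℚ)).SplittingField)).roots)
      = Multiset.map lam Finset.univ.val := by
    rw [← hroots, hmap1, hsplitsL.roots_map ι.toRingHom]
    rfl
  have hex : ∀ i, ∃ r, r ∈ ((f.map (Int.castRingHom ℚ)).map
      (algebraMap ℚ (f.map (Int.castRingHom ℚ)).SplittingField)).roots ∧ ι r = lam i := by
    intro i
    refine Multiset.mem_map.mp ?_
    rw [hroots2]
    exact Multiset.mem_map_of_mem _ (Finset.mem_val.mpr (Finset.mem_univ i))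
  choose lam' hmemL hιlam using hex
  have hrootf : ∀ i, aeval (lam' i) f = 0 := by
    intro i
    have h1 := (mem_roots (((hf.map (Int.castRingHom ℚ)).map
      (algebraMap ℚ (f.map (Int.castRingHom ℚ)).SplittingField)).ne_zero)).mp (hmemL i)
    rw [IsRoot.def, eval_map, ← aeval_def] at h1
    have h2 : aeval (lam' i) (f.map (algebraMap ℤ ℚ)) = 0 := h1
    rwa [aeval_map_algebraMap] at h2
  have hμι : ι (∏ i, lam' i ^ e i) = μ := by
    rw [hμ, map_prod]
    exact Finset.prod_congr rfl fun i _ => by rw [map_zpow₀, hιlam]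
  have hmin : minpoly ℚ μ = minpoly ℚ (∏ i, lam' i ^ e i) := by
    rw [← hμι]
    exact minpoly.algHom_eq ι ι.toRingHom.injective _
  rw [hmin] at hodd
  obtain ⟨N, hNpos, hpm⟩ := stmt13_main f hf hdeg hconst hno lam' hrootf e _ rfl hodd
  have hμN : μ ^ N = 1 ∨ μ ^ N = -1 := by
    rcases hpm with h | h
    · left; rw [← hμι, ← map_pow, h, map_one]
    · right; rw [← hμι, ← map_pow, h, map_neg, map_one]
  have hμ2N : μ ^ (2 * N) = 1 := by
    rw [mul_comm, pow_mul]
    rcases hμN with h | h <;> rw [h] <;> norm_num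
  have hfin : IsOfFinOrder μ :=
    isOfFinOrder_iff_pow_eq_one.mpr ⟨2 * N, by omega, hμ2N⟩
  have hordpos : 0 < orderOf μ := hfin.orderOf_pos
  have hprim : IsPrimitiveRoot μ (orderOf μ) := IsPrimitiveRoot.orderOf μ
  have hdegtot : (minpoly ℚ μ).natDegree = (orderOf μ).totient := by
    rw [← Polynomial.cyclotomic_eq_minpoly_rat hprim hordpos, natDegree_cyclotomic]
  rw [hmin] at hdegtot
  by_cases h1 : orderOf μ = 1
  · exact hirrat 1 (by rw [orderOf_eq_one_iff.mp h1, Rat.cast_one])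
  by_cases h2 : orderOf μ = 2
  · have hsq : μ ^ 2 = 1 := by rw [← h2]; exact pow_orderOf_eq_one μ
    have : (μ - 1) * (μ + 1) = 0 := by ring_nf; linear_combination hsq
    rcases mul_eq_zero.mp this with h | h
    · exact hirrat 1 (by rw [sub_eq_zero.mp h, Rat.cast_one])
    · refine hirrat (-1) ?_
      rw [eq_neg_of_add_eq_zero_left h]; norm_num
  · exact hodd (hdegtot ▸ Nat.totient_even (by omega))
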